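/- Let n be odd, n ≥ 3, and let G be the graph on n vertices formed by two copies of the complete graph K_{(n+1)/2} sharing exactly one common vertex (equivalently, the complement of G is the complete bipartite graph with both parts of size (n-1)/2). Then the largest eigenvalue of the normalized graph Laplacian of G is exactly (n+1)/(n-1). -/

import Mathlib

open Finset

/-- The normalized graph Laplacian `Lf(x) = f(x) - (1/d(x)) ∑_{y ~ x} f(y)`. -/
noncomputable def normLap {V : Type*} [Fintype V] [DecidableEq V] (G : SimpleGraph V)
    [DecidableRel G.Adj] (f : V → ℝ) : V → ℝ :=
  fun x => f x - (∑ y ∈ G.neighborFinset x, f y) / (G.degree x : ℝ)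

/-- `μ` is an eigenvalue of the normalized Laplacian of `G`. -/
def IsNormLapEigenvalue {V : Type*} [Fintype V] [DecidableEq V] (G : SimpleGraph V)
    [DecidableRel G.Adj] (μ : ℝ) : Prop :=
  ∃ f : V → ℝ, f ≠ 0 ∧ normLap G f = μ • f

/-- `μ` is the largest eigenvalue of the normalized Laplacian of `G`. -/
def IsMaxNormLapEigenvalue {V : Type*} [Fintype V] [DecidableEq V] (G : SimpleGraph V)
    [DecidableRel G.Adj] (μ : ℝ) : Prop :=
  IsNormLapEigenvalue G μ ∧ ∀ ν, IsNormLapEigenvalue G ν → ν ≤ μ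

/-- For odd `n ≥ 3`, the graph made of two copies of `K_{(n+1)/2}`
sharing exactly one vertex (equivalently, whose complement is the complete bipartite graph
with both parts of size `(n-1)/2`) has largest normalized Laplacian eigenvalue exactly
`(n+1)/(n-1)`. -/
theorem maxEigenvalue_twoCliques {V : Type*} [Fintype V] [DecidableEq V]
    (G : SimpleGraph V) [DecidableRel G.Adj] (n : ℕ) (hn : n = Fintype.card V)
    (hodd : Odd n) (hn3 : 3 ≤ n) (P Q : Finset V) (hPQ : Disjoint P Q)
    (hP : 2 * (P.card : ℝ) = (n : ℝ) - 1) (hQ : 2 * (Q.card : ℝ) = (n : ℝ) - 1)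
    (hcompl : ∀ x y : V, Gᶜ.Adj x y ↔ ((x ∈ P ∧ y ∈ Q) ∨ (x ∈ Q ∧ y ∈ P))) :
    IsMaxNormLapEigenvalue G (((n : ℝ) + 1) / ((n : ℝ) - 1)) := by
  -- basic natural-number cardinalities
  have h1n : 1 ≤ n := by omega
  have hPn : 2 * P.card = n - 1 := by
    have h : ((2 * P.card : ℕ) : ℝ) = ((n - 1 : ℕ) : ℝ) := by
      push_cast [Nat.cast_sub h1n]
      linarith [hP]
    exact_mod_cast h
  have hQn : 2 * Q.card = n - 1 := by
    have h : ((2 * Q.card : ℕ) : ℝ) = ((n - 1 : ℕ) : ℝ) := by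
      push_cast [Nat.cast_sub h1n]
      linarith [hQ]
    exact_mod_cast h
  set k := P.card with hk
  have hQk : Q.card = k := by omega
  have hk1 : 1 ≤ k := by omega
  have hnk : n = 2 * k + 1 := by omega
  have hkR : (1 : ℝ) ≤ (k : ℝ) := by exact_mod_cast hk1
  have hkne : (k : ℝ) ≠ 0 := (by linarith : (0 : ℝ) < (k : ℝ)).ne'
  have hnR : (n : ℝ) = 2 * (k : ℝ) + 1 := by exact_mod_cast congrArg (Nat.cast (R := ℝ)) hnk
  have hμ : ((n : ℝ) + 1) / ((n : ℝ) - 1) = ((k : ℝ) + 1) / (k : ℝ) := by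
    rw [hnR]
    rw [div_eq_div_iff (by linarith) (by linarith)]
    ring
  -- membership facts
  have hPQ' : ∀ x ∈ P, x ∉ Q := fun x hx => Finset.disjoint_left.mp hPQ hx
  have hQP' : ∀ x ∈ Q, x ∉ P := fun x hx => Finset.disjoint_right.mp hPQ hx
  -- adjacency characterization
  have hadj : ∀ x y, G.Adj x y ↔ x ≠ y ∧ ¬((x ∈ P ∧ y ∈ Q) ∨ (x ∈ Q ∧ y ∈ P)) := by
    intro x y
    constructor
    · intro h
      refine ⟨h.ne, fun hc => ?_⟩
      have h2 := (hcompl x y).mpr hc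
      rw [SimpleGraph.compl_adj] at h2
      exact h2.2 h
    · rintro ⟨hne, hc⟩
      by_contra hadj
      exact hc ((hcompl x y).mp ((SimpleGraph.compl_adj (G := G) (v := x) (w := y)).mpr ⟨hne, hadj⟩))
  -- the unique center vertex
  have hcardU : Fintype.card V = 2 * k + 1 := by omega
  have hcardPQ : (P ∪ Q).card = 2 * k := by
    rw [Finset.card_union_of_disjoint hPQ]; omega
  have hR : (univ \ (P ∪ Q)).card = 1 := by
    rw [Finset.card_sdiff_of_subset (Finset.subset_univ _), Finset.card_univ, hcardU, hcardPQ]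
    omega
  obtain ⟨v0, hv0⟩ := Finset.card_eq_one.mp hR
  have hv0mem : v0 ∈ univ \ (P ∪ Q) := by rw [hv0]; exact Finset.mem_singleton_self v0
  have hv0P : v0 ∉ P := by
    have := Finset.mem_sdiff.mp hv0mem
    simp only [Finset.mem_union] at this
    exact fun h => this.2 (Or.inl h)
  have hv0Q : v0 ∉ Q := by
    have := Finset.mem_sdiff.mp hv0mem
    simp only [Finset.mem_union] at this
    exact fun h => this.2 (Or.inr h)
  have huniq : ∀ y, y ∉ P → y ∉ Q → y = v0 := by
    intro y hyP hyQ
    have hy : y ∈ univ \ (P ∪ Q) := by simp [hyP, hyQ]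
    rw [hv0] at hy
    exact Finset.mem_singleton.mp hy
  -- neighbor finsets
  have hnbrP : ∀ x ∈ P, G.neighborFinset x = (univ \ Q).erase x := by
    intro x hx
    ext y
    simp only [SimpleGraph.mem_neighborFinset, Finset.mem_erase, Finset.mem_sdiff,
      Finset.mem_univ, true_and]
    rw [hadj]
    constructor
    · rintro ⟨hne, hc⟩
      exact ⟨fun h => hne h.symm, fun hyQ => hc (Or.inl ⟨hx, hyQ⟩)⟩
    · rintro ⟨hne, hyQ⟩
      exact ⟨fun h => hne h.symm, fun hc => hc.elim (fun h => hyQ h.2) (fun h => (hPQ' x hx) h.1)⟩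
  have hnbrQ : ∀ x ∈ Q, G.neighborFinset x = (univ \ P).erase x := by
    intro x hx
    ext y
    simp only [SimpleGraph.mem_neighborFinset, Finset.mem_erase, Finset.mem_sdiff,
      Finset.mem_univ, true_and]
    rw [hadj]
    constructor
    · rintro ⟨hne, hc⟩
      exact ⟨fun h => hne h.symm, fun hyP => hc (Or.inr ⟨hx, hyP⟩)⟩
    · rintro ⟨hne, hyP⟩
      exact ⟨fun h => hne h.symm, fun hc => hc.elim (fun h => (hQP' x hx) h.1) (fun h => hyP h.2)⟩
  have hnbrC : G.neighborFinset v0 = univ.erase v0 := by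
    ext y
    simp only [SimpleGraph.mem_neighborFinset, Finset.mem_erase, Finset.mem_univ, and_true]
    rw [hadj]
    constructor
    · rintro ⟨hne, _⟩; exact fun h => hne h.symm
    · intro hne
      exact ⟨fun h => hne h.symm, fun hc => hc.elim (fun h => hv0P h.1) (fun h => hv0Q h.1)⟩
  -- degrees
  have hdegP : ∀ x ∈ P, G.degree x = k := by
    intro x hx
    rw [← SimpleGraph.card_neighborFinset_eq_degree, hnbrP x hx,
      Finset.card_erase_of_mem (by simp [hPQ' x hx]),
      Finset.card_sdiff_of_subset (Finset.subset_univ _), Finset.card_univ, hcardU, hQk]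
    omega
  have hdegQ : ∀ x ∈ Q, G.degree x = k := by
    intro x hx
    rw [← SimpleGraph.card_neighborFinset_eq_degree, hnbrQ x hx,
      Finset.card_erase_of_mem (by simp [hQP' x hx]),
      Finset.card_sdiff_of_subset (Finset.subset_univ _), Finset.card_univ, hcardU, ← hk]
    omega
  have hdegC : G.degree v0 = 2 * k := by
    rw [← SimpleGraph.card_neighborFinset_eq_degree, hnbrC,
      Finset.card_erase_of_mem (Finset.mem_univ v0), Finset.card_univ, hcardU]
    omega
  -- set identities
  have hUQ : univ \ Q = insert v0 P := by
    ext y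
    simp only [Finset.mem_sdiff, Finset.mem_univ, true_and, Finset.mem_insert]
    constructor
    · intro hyQ
      by_cases hyP : y ∈ P
      · exact Or.inr hyP
      · exact Or.inl (huniq y hyP hyQ)
    · rintro (rfl | hyP)
      · exact hv0Q
      · exact hPQ' y hyP
  have hUP : univ \ P = insert v0 Q := by
    ext y
    simp only [Finset.mem_sdiff, Finset.mem_univ, true_and, Finset.mem_insert]
    constructor
    · intro hyP
      by_cases hyQ : y ∈ Q
      · exact Or.inr hyQ
      · exact Or.inl (huniq y hyP hyQ)
    · rintro (rfl | hyQ)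
      · exact hv0P
      · exact hQP' y hyQ
  have hUniv : (univ : Finset V) = insert v0 (P ∪ Q) := by
    ext y
    simp only [Finset.mem_univ, true_iff, Finset.mem_insert, Finset.mem_union]
    by_cases hyP : y ∈ P
    · exact Or.inr (Or.inl hyP)
    · by_cases hyQ : y ∈ Q
      · exact Or.inr (Or.inr hyQ)
      · exact Or.inl (huniq y hyP hyQ)
  have hv0PQ : v0 ∉ P ∪ Q := by simp [hv0P, hv0Q]
  -- neighbor sums
  have hsumP : ∀ (f : V → ℝ), ∀ x ∈ P,
      ∑ y ∈ G.neighborFinset x, f y = (∑ y ∈ P, f y) + f v0 - f x := by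
    intro f x hx
    rw [hnbrP x hx, Finset.sum_erase_eq_sub (by simp [hPQ' x hx]), hUQ,
      Finset.sum_insert hv0P]
    ring
  have hsumQ : ∀ (f : V → ℝ), ∀ x ∈ Q,
      ∑ y ∈ G.neighborFinset x, f y = (∑ y ∈ Q, f y) + f v0 - f x := by
    intro f x hx
    rw [hnbrQ x hx, Finset.sum_erase_eq_sub (by simp [hQP' x hx]), hUP,
      Finset.sum_insert hv0Q]
    ring
  have hsumC : ∀ (f : V → ℝ),
      ∑ y ∈ G.neighborFinset v0, f y = (∑ y ∈ P, f y) + (∑ y ∈ Q, f y) := by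
    intro f
    rw [hnbrC, Finset.sum_erase_eq_sub (Finset.mem_univ v0), hUniv,
      Finset.sum_insert hv0PQ, Finset.sum_union hPQ]
    ring
  constructor
  · -- existence of the eigenvalue
    refine ⟨fun x => if x ∈ P ∪ Q then (1 : ℝ) else -(k : ℝ), ?_, ?_⟩
    · obtain ⟨x0, hx0⟩ := Finset.card_pos.mp (show 0 < P.card by omega)
      intro h
      have h2 := congrFun h x0
      simp only [Finset.mem_union, hx0, true_or, if_true, Pi.zero_apply] at h2
      norm_num at h2
    · set f0 : V → ℝ := fun x => if x ∈ P ∪ Q then (1 : ℝ) else -(k : ℝ) with hf0def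
      have hSP0 : ∑ y ∈ P, f0 y = (k : ℝ) := by
        have h1 : ∀ y ∈ P, f0 y = 1 := fun y hy => by simp [hf0def, hy]
        rw [Finset.sum_congr rfl h1, Finset.sum_const]
        simp [hk]
      have hSQ0 : ∑ y ∈ Q, f0 y = (k : ℝ) := by
        have h1 : ∀ y ∈ Q, f0 y = 1 := fun y hy => by simp [hf0def, hy]
        rw [Finset.sum_congr rfl h1, Finset.sum_const]
        simp [hQk]
      have hc0 : f0 v0 = -(k : ℝ) := by
        simp [hf0def, hv0P, hv0Q]
      funext x
      simp only [normLap, Pi.smul_apply, smul_eq_mul]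
      by_cases hxP : x ∈ P
      · rw [hsumP f0 x hxP, hdegP x hxP, hSP0, hc0]
        have hfx : f0 x = 1 := by simp [hf0def, hxP]
        rw [hfx, hμ]
        field_simp
        all_goals ring
      · by_cases hxQ : x ∈ Q
        · rw [hsumQ f0 x hxQ, hdegQ x hxQ, hSQ0, hc0]
          have hfx : f0 x = 1 := by simp [hf0def, hxQ]
          rw [hfx, hμ]
          field_simp
          all_goals ring
        · have hx0 : x = v0 := huniq x hxP hxQ
          subst hx0
          rw [hsumC f0, hdegC, hSP0, hSQ0, hc0, hμ]
          have h2k : ((2 * k : ℕ) : ℝ) = 2 * (k : ℝ) := by push_cast; ring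
          rw [h2k]
          field_simp
          ring
  · -- maximality
    rintro ν ⟨f, hfne, hfeq⟩
    by_contra hcon
    push_neg at hcon
    rw [hμ] at hcon
    set t : ℝ := 1 - ν with htdef
    have heq : ∀ x, ∑ y ∈ G.neighborFinset x, f y = t * (G.degree x : ℝ) * f x := by
      intro x
      have h := congrFun hfeq x
      simp only [normLap, Pi.smul_apply, smul_eq_mul] at h
      have hd : (0 : ℝ) < (G.degree x : ℝ) := by
        have hd2 : 0 < G.degree x := by
          by_cases hxP : x ∈ P
          · rw [hdegP x hxP]; omega
          · by_cases hxQ : x ∈ Q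
            · rw [hdegQ x hxQ]; omega
            · rw [huniq x hxP hxQ, hdegC]; omega
        exact_mod_cast hd2
      have h2 : (∑ y ∈ G.neighborFinset x, f y) / (G.degree x : ℝ) = t * f x := by
        rw [htdef]; linarith
      rw [div_eq_iff (ne_of_gt hd)] at h2
      rw [h2]; ring
    -- B = t*k+1 is negative
    have hB : t * (k : ℝ) + 1 < 0 := by
      have hkpos : (0 : ℝ) < (k : ℝ) := by linarith
      have h3 : ((k : ℝ) + 1) / (k : ℝ) < ν := hcon
      have h4 := (div_lt_iff₀ hkpos).mp h3
      rw [htdef]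
      nlinarith
    have hBne : t * (k : ℝ) + 1 ≠ 0 := ne_of_lt hB
    -- f is constant on P and on Q
    have heP : ∀ x ∈ P, f x * (t * (k : ℝ) + 1) = (∑ y ∈ P, f y) + f v0 := by
      intro x hx
      have h := heq x
      rw [hsumP f x hx, hdegP x hx] at h
      linear_combination -h
    have heQ : ∀ x ∈ Q, f x * (t * (k : ℝ) + 1) = (∑ y ∈ Q, f y) + f v0 := by
      intro x hx
      have h := heq x
      rw [hsumQ f x hx, hdegQ x hx] at h
      linear_combination -h
    obtain ⟨x0, hx0⟩ := Finset.card_pos.mp (show 0 < P.card by omega)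
    obtain ⟨y0, hy0⟩ := Finset.card_pos.mp (show 0 < Q.card by omega)
    set p : ℝ := f x0 with hpdef
    set q : ℝ := f y0 with hqdef
    set c : ℝ := f v0 with hcdef
    have hfPc : ∀ x ∈ P, f x = p := by
      intro x hx
      have h1 := heP x hx
      have h2 := heP x0 hx0
      have : f x * (t * (k : ℝ) + 1) = p * (t * (k : ℝ) + 1) := by rw [h1, h2]
      exact mul_right_cancel₀ hBne this
    have hfQc : ∀ x ∈ Q, f x = q := by
      intro x hx
      have h1 := heQ x hx
      have h2 := heQ y0 hy0
      have : f x * (t * (k : ℝ) + 1) = q * (t * (k : ℝ) + 1) := by rw [h1, h2]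
      exact mul_right_cancel₀ hBne this
    have hSP : ∑ y ∈ P, f y = (k : ℝ) * p := by
      rw [Finset.sum_congr rfl hfPc, Finset.sum_const]
      simp [hk, nsmul_eq_mul]
    have hSQ : ∑ y ∈ Q, f y = (k : ℝ) * q := by
      rw [Finset.sum_congr rfl hfQc, Finset.sum_const]
      simp [hQk, nsmul_eq_mul]
    -- the three key equations
    have hc1 : c = (t * (k : ℝ) + 1 - (k : ℝ)) * p := by
      have h := heP x0 hx0
      rw [hSP] at h
      linear_combination -h
    have hc2 : c = (t * (k : ℝ) + 1 - (k : ℝ)) * q := by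
      have h := heQ y0 hy0
      rw [hSQ] at h
      linear_combination -h
    have hcen : p + q = 2 * t * c := by
      have h := heq v0
      rw [hsumC f, hdegC, hSP, hSQ] at h
      have h2k : ((2 * k : ℕ) : ℝ) = 2 * (k : ℝ) := by push_cast; ring
      rw [h2k] at h
      have h3 : (k : ℝ) * (p + q) = (k : ℝ) * (2 * t * c) := by linear_combination h
      exact mul_left_cancel₀ hkne h3
    by_cases hA : t * (k : ℝ) + 1 - (k : ℝ) = 0
    · linarith
    · have hpq : p = q := by
        have h : (t * (k : ℝ) + 1 - (k : ℝ)) * p = (t * (k : ℝ) + 1 - (k : ℝ)) * q := by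
          rw [← hc1, ← hc2]
        exact mul_left_cancel₀ hA h
      by_cases hcz : c = 0
      · have hp0 : p = 0 := by
          have h : (t * (k : ℝ) + 1 - (k : ℝ)) * p = 0 := by rw [← hc1, hcz]
          exact (mul_eq_zero.mp h).resolve_left hA
        apply hfne
        funext x
        simp only [Pi.zero_apply]
        by_cases hxP : x ∈ P
        · rw [hfPc x hxP, hp0]
        · by_cases hxQ : x ∈ Q
          · rw [hfQc x hxQ, ← hpq, hp0]
          · rw [huniq x hxP hxQ, ← hcdef, hcz]
      · have hp : p = t * c := by rw [hpq] at hcen ⊢; linarith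
        have h3 : c = (t * (k : ℝ) + 1 - (k : ℝ)) * (t * c) := by rw [← hp]; exact hc1
        have h4 : ((t * (k : ℝ) + 1 - (k : ℝ)) * t - 1) * c = 0 := by linear_combination -h3
        have hAt : (t * (k : ℝ) + 1 - (k : ℝ)) * t - 1 = 0 :=
          (mul_eq_zero.mp h4).resolve_right hcz
        have h5 : (t - 1) * (t * (k : ℝ) + 1) = 0 := by linear_combination hAt
        rcases mul_eq_zero.mp h5 with h6 | h6
        · have ht1 : t = 1 := by linarith
          rw [ht1] at hB
          linarith
        · linarith
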